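/- Let p be a prime and Q a semi-extraspecial finite p-group with |Q : Z(Q)| = p^{2n}. Then for every maximal subgroup Z of Z(Q) and every subgroup A with Z ≤ A ≤ Q such that A/Z is abelian, one has |A/Z| ≤ p^{1+n}. Consequently, every abelian subgroup A of Q satisfies |A| ≤ |Z(Q)|·p^n. -/

import Mathlib

/-- A finite `p`-group `E` is extraspecial if `Z(E) = [E,E] = Φ(E)` and `|Z(E)| = p`. -/
def IsExtraspecial (p : ℕ) (E : Type*) [Group E] : Prop :=
  Subgroup.center E = commutator E ∧ commutator E = frattini E ∧
    Nat.card (Subgroup.center E) = p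

/-- A finite `p`-group `Q` is semi-extraspecial if `Φ(Q) = [Q,Q] = Z(Q)` and `Q/Z` is
extraspecial for every maximal subgroup `Z` of `Z(Q)`. -/
def IsSemiExtraspecial (p : ℕ) (Q : Type*) [Group Q] : Prop :=
  frattini Q = commutator Q ∧ commutator Q = Subgroup.center Q ∧
  ∀ (Z : Subgroup Q) [Z.Normal], Z < Subgroup.center Q →
    (∀ Z' : Subgroup Q, Z < Z' → Z' ≤ Subgroup.center Q → Z' = Subgroup.center Q) →
    IsExtraspecial p (Q ⧸ Z)

open scoped Pointwise

open scoped commutatorElement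

section Helpers

variable {G : Type*} [Group G]

lemma my_normal_of_le_center {Z : Subgroup G} (h : Z ≤ Subgroup.center G) : Z.Normal := by
  constructor
  intro z hz g
  have hzg : g * z = z * g := Subgroup.mem_center_iff.mp (h hz) g
  have : g * z * g⁻¹ = z := by rw [hzg, mul_inv_cancel_right]
  rwa [this]

lemma comm_mul_left (hc : ∀ x y : G, ⁅x, y⁆ ∈ Subgroup.center G) (x y a : G) :
    ⁅x * y, a⁆ = ⁅x, a⁆ * ⁅y, a⁆ := by
  have h1 : ∀ g : G, g * ⁅y, a⁆ = ⁅y, a⁆ * g := fun g => Subgroup.mem_center_iff.mp (hc y a) g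
  have key : ⁅x * y, a⁆ = x * ⁅y, a⁆ * x⁻¹ * ⁅x, a⁆ := by
    simp only [commutatorElement_def]; group
  rw [key, h1 x, mul_inv_cancel_right]
  exact (h1 ⁅x, a⁆).symm

lemma comm_mul_right (hc : ∀ x y : G, ⁅x, y⁆ ∈ Subgroup.center G) (x a b : G) :
    ⁅x, a * b⁆ = ⁅x, a⁆ * ⁅x, b⁆ := by
  have h1 : ∀ g : G, g * ⁅x, b⁆ = ⁅x, b⁆ * g := fun g => Subgroup.mem_center_iff.mp (hc x b) g
  have key : ⁅x, a * b⁆ = ⁅x, a⁆ * (a * ⁅x, b⁆ * a⁻¹) := by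
    simp only [commutatorElement_def]; group
  rw [key, h1 a, mul_inv_cancel_right]

lemma comm_inv_left (hc : ∀ x y : G, ⁅x, y⁆ ∈ Subgroup.center G) (x a : G) :
    ⁅x⁻¹, a⁆ = ⁅x, a⁆⁻¹ := by
  have h1 : ⁅x, a⁆ * ⁅x⁻¹, a⁆ = 1 := by
    rw [← comm_mul_left hc, mul_inv_cancel, commutatorElement_one_left]
  exact eq_inv_of_mul_eq_one_right h1

lemma comm_inv_right (hc : ∀ x y : G, ⁅x, y⁆ ∈ Subgroup.center G) (x a : G) :
    ⁅x, a⁻¹⁆ = ⁅x, a⁆⁻¹ := by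
  have h1 : ⁅x, a⁆ * ⁅x, a⁻¹⁆ = 1 := by
    rw [← comm_mul_right hc, mul_inv_cancel, commutatorElement_one_right]
  exact eq_inv_of_mul_eq_one_right h1

lemma comm_central_left {z : G} (h : z ∈ Subgroup.center G) (a c : G) :
    ⁅a * z, c⁆ = ⁅a, c⁆ := by
  have hz := Subgroup.mem_center_iff.mp h
  calc ⁅a * z, c⁆ = a * (z * c) * z⁻¹ * a⁻¹ * c⁻¹ := by
        simp only [commutatorElement_def]; group
    _ = a * (c * z) * z⁻¹ * a⁻¹ * c⁻¹ := by rw [hz c]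
    _ = ⁅a, c⁆ := by simp only [commutatorElement_def]; group

lemma comm_central_right {z : G} (h : z ∈ Subgroup.center G) (c a : G) :
    ⁅c, a * z⁆ = ⁅c, a⁆ := by
  have hz := Subgroup.mem_center_iff.mp h
  calc ⁅c, a * z⁆ = c * a * (z * c⁻¹) * z⁻¹ * a⁻¹ := by
        simp only [commutatorElement_def]; group
    _ = c * a * (c⁻¹ * z) * z⁻¹ * a⁻¹ := by rw [hz c⁻¹]
    _ = ⁅c, a⁆ := by simp only [commutatorElement_def]; group

lemma pgroup_exists_gen {p : ℕ} (hp : p.Prime) {G : Type*} [Group G] [Finite G]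
    (hG : IsPGroup p G) :
    ∃ S : Finset G, Subgroup.closure (S : Set G) = ⊤ ∧ p ^ S.card ≤ Nat.card G := by
  classical
  haveI : Fact p.Prime := ⟨hp⟩
  have key : ∀ m : ℕ, ∀ H : Subgroup G, Nat.card G ≤ m + Nat.card H →
      ∃ S : Finset G, H ⊔ Subgroup.closure (S : Set G) = ⊤ ∧
        p ^ S.card * Nat.card H ≤ Nat.card G := by
    intro m
    induction m with
    | zero =>
      intro H hH
      have hle : Nat.card G ≤ Nat.card H := by simpa using hH
      have hHtop : H = ⊤ := H.eq_top_of_le_card hle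
      exact ⟨∅, by simp [hHtop], by simpa using H.card_le_card_group⟩
    | succ m ih =>
      intro H hH
      by_cases htop : H = ⊤
      · exact ⟨∅, by simp [htop], by simpa using H.card_le_card_group⟩
      · have hx : ∃ x : G, x ∉ H := by
          by_contra hcon
          push_neg at hcon
          exact htop ((Subgroup.eq_top_iff' H).mpr hcon)
        obtain ⟨x, hx⟩ := hx
        set H' := H ⊔ Subgroup.closure {x} with hH'def
        have hle : H ≤ H' := le_sup_left
        have hxH' : x ∈ H' :=
          Subgroup.mem_sup_right (Subgroup.subset_closure (Set.mem_singleton x))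
        have hne : H ≠ H' := fun h => hx (h ▸ hxH')
        obtain ⟨b, hb⟩ := (hG.to_subgroup H).exists_card_eq
        obtain ⟨a, ha⟩ := (hG.to_subgroup H').exists_card_eq
        have hdvd : Nat.card H ∣ Nat.card H' := Subgroup.card_dvd_of_le hle
        have hle' : Nat.card H ≤ Nat.card H' := Nat.le_of_dvd Nat.card_pos hdvd
        have hlt : Nat.card H < Nat.card H' :=
          lt_of_le_of_ne hle' (fun h => hne (Subgroup.eq_of_le_of_card_ge hle h.ge))
        have hcard : p * Nat.card H ≤ Nat.card H' := by
          rw [hb, ha] at hlt ⊢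
          have hba : b < a := by
            by_contra hc
            push_neg at hc
            exact absurd hlt (not_lt.mpr (Nat.pow_le_pow_right hp.one_lt.le hc))
          calc p * p ^ b = p ^ (b + 1) := by rw [pow_succ, mul_comm]
            _ ≤ p ^ a := Nat.pow_le_pow_right hp.one_lt.le hba
        have h2 : Nat.card G ≤ m + Nat.card H' := by omega
        obtain ⟨S', hS'top, hS'card⟩ := ih H' h2
        refine ⟨insert x S', ?_, ?_⟩
        · rw [Finset.coe_insert, Set.insert_eq, Subgroup.closure_union, ← sup_assoc]
          rw [← hH'def]
          exact hS'top
        · have hc : (insert x S').card ≤ S'.card + 1 := Finset.card_insert_le x S'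
          calc p ^ (insert x S').card * Nat.card H
              ≤ p ^ (S'.card + 1) * Nat.card H :=
                Nat.mul_le_mul_right _ (Nat.pow_le_pow_right hp.one_lt.le hc)
            _ = p ^ S'.card * (p * Nat.card H) := by ring
            _ ≤ p ^ S'.card * Nat.card H' := Nat.mul_le_mul_left _ hcard
            _ ≤ Nat.card G := hS'card
  obtain ⟨S, hS, hcard⟩ := key (Nat.card G) ⊥ (by simp)
  exact ⟨S, by simpa using hS, by simpa using hcard⟩

end Helpers


lemma center_map_eq (p : ℕ) (hp : p.Prime) (Q : Type*) [Group Q] [Finite Q]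
    (Z : Subgroup Q) [Z.Normal] (hZlt : Z < Subgroup.center Q)
    (hcard : Nat.card (Subgroup.center (Q ⧸ Z)) = p) :
    (Subgroup.center Q).map (QuotientGroup.mk' Z) = Subgroup.center (Q ⧸ Z) ∧
      Nat.card ((Subgroup.center Q).map (QuotientGroup.mk' Z)) = p ∧
      Z.relIndex (Subgroup.center Q) = p ∧
      (∀ z ∈ Subgroup.center Q, z ^ p ∈ Z) := by
  haveI : Finite (Q ⧸ Z) := Quotient.finite _
  set M := (Subgroup.center Q).map (QuotientGroup.mk' Z) with hMdef
  have hMle : M ≤ Subgroup.center (Q ⧸ Z) := by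
    rintro _ ⟨z, hz, rfl⟩
    rw [Subgroup.mem_center_iff]
    intro g
    refine QuotientGroup.induction_on g ?_
    intro g
    show (g : Q ⧸ Z) * (z : Q ⧸ Z) = (z : Q ⧸ Z) * (g : Q ⧸ Z)
    rw [← QuotientGroup.mk_mul, ← QuotientGroup.mk_mul, Subgroup.mem_center_iff.mp hz g]
  have hMdvd : Nat.card M ∣ p := hcard ▸ Subgroup.card_dvd_of_le hMle
  have hMne : Nat.card M ≠ 1 := by
    obtain ⟨z, hzc, hzZ⟩ := SetLike.exists_of_lt hZlt
    intro h1
    have hbot : M = ⊥ := (Subgroup.eq_bot_iff_card (H := M)).mpr h1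
    have hmem : ((z : Q ⧸ Z)) ∈ M := ⟨z, hzc, rfl⟩
    rw [hbot, Subgroup.mem_bot] at hmem
    exact hzZ ((QuotientGroup.eq_one_iff z).mp hmem)
  have hMp : Nat.card M = p := (hp.eq_one_or_self_of_dvd _ hMdvd).resolve_left hMne
  have heq : M = Subgroup.center (Q ⧸ Z) :=
    Subgroup.eq_of_le_of_card_ge hMle (by rw [hcard, hMp])
  have hrel : Z.relIndex (Subgroup.center Q) = p := by
    rw [← QuotientGroup.ker_mk' Z, Subgroup.relIndex_ker, ← hMdef, hMp]
  refine ⟨heq, hMp, hrel, ?_⟩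
  intro z hz
  have hmem : ((z : Q ⧸ Z)) ∈ M := ⟨z, hz, rfl⟩
  have hpow : ((z : Q ⧸ Z)) ^ p = 1 := by
    have := pow_card_eq_one' (G := M) (x := ⟨_, hmem⟩)
    rw [hMp] at this
    have := congrArg (Subtype.val) this
    simpa using this
  have hpow' : ((z ^ p : Q) : Q ⧸ Z) = 1 := by
    rw [QuotientGroup.mk_pow]; exact hpow
  exact (QuotientGroup.eq_one_iff _).mp hpow'

lemma sup_center_comm {Q : Type*} [Group Q] (A Z : Subgroup Q)
    (hA : ∀ a ∈ A, ∀ b ∈ A, ⁅a, b⁆ ∈ Z) :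
    ∀ a ∈ A ⊔ Subgroup.center Q, ∀ b ∈ A ⊔ Subgroup.center Q, ⁅a, b⁆ ∈ Z := by
  intro x hx y hy
  have hx' : x ∈ ((A : Set Q) * (Subgroup.center Q : Set Q)) := by
    rw [← Subgroup.mul_normal]; exact hx
  have hy' : y ∈ ((A : Set Q) * (Subgroup.center Q : Set Q)) := by
    rw [← Subgroup.mul_normal]; exact hy
  rw [Set.mem_mul] at hx' hy'
  obtain ⟨a, ha, z, hz, rfl⟩ := hx'
  obtain ⟨b, hb, w, hw, rfl⟩ := hy'
  rw [comm_central_left hz, comm_central_right hw]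
  exact hA a ha b hb


lemma part1_core (p : ℕ) (hp : p.Prime) (Q : Type*) [Group Q] [Finite Q]
    (hQ : IsPGroup p Q)
    (hc2 : ∀ x y : Q, ⁅x, y⁆ ∈ Subgroup.center Q)
    (Z : Subgroup Q) [Z.Normal] (hZle : Z ≤ Subgroup.center Q)
    (hcentE : (Subgroup.center Q).map (QuotientGroup.mk' Z) = Subgroup.center (Q ⧸ Z))
    (hMp : Nat.card ((Subgroup.center Q).map (QuotientGroup.mk' Z)) = p)
    (A : Subgroup Q) (_hcA : Subgroup.center Q ≤ A)
    (hA : ∀ a ∈ A, ∀ b ∈ A, ⁅a, b⁆ ∈ Z) :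
    (Subgroup.center Q).relIndex A ≤ A.index := by
  classical
  -- the "commutator centralizer" C of A modulo Z
  set C : Subgroup Q :=
    { carrier := {x : Q | ∀ a ∈ A, ⁅x, a⁆ ∈ Z}
      one_mem' := by
        intro a ha
        show ⁅(1 : Q), a⁆ ∈ Z
        rw [commutatorElement_one_left]
        exact Z.one_mem
      mul_mem' := by
        intro x y hx hy a ha
        show ⁅x * y, a⁆ ∈ Z
        rw [comm_mul_left hc2]
        exact Z.mul_mem (hx a ha) (hy a ha)
      inv_mem' := by
        intro x hx a ha
        show ⁅x⁻¹, a⁆ ∈ Z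
        rw [comm_inv_left hc2]
        exact Z.inv_mem (hx a ha) } with hCdef
  have hmemC : ∀ x : Q, x ∈ C ↔ ∀ a ∈ A, ⁅x, a⁆ ∈ Z := fun x => Iff.rfl
  have hcC : ∀ w : Q, w ∈ Subgroup.center Q → w ∈ C := by
    intro w hw a ha
    show ⁅w, a⁆ ∈ Z
    have : ⁅w, a⁆ = 1 :=
      commutatorElement_eq_one_iff_commute.mpr ((Subgroup.mem_center_iff.mp hw a).symm)
    rw [this]; exact Z.one_mem
  have hCnormal : C.Normal := by
    constructor
    intro c hc g
    intro a ha
    show ⁅g * c * g⁻¹, a⁆ ∈ Z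
    have hdecomp : g * c * g⁻¹ = ⁅g, c⁆ * c := by
      simp only [commutatorElement_def]; group
    rw [hdecomp, comm_mul_left hc2]
    refine Z.mul_mem ?_ (hc a ha)
    exact hcC _ (hc2 g c) a ha
  haveI := hCnormal
  have hAC : A ≤ C := fun a ha => fun b hb => hA a ha b hb
  haveI : Finite (Q ⧸ C) := Quotient.finite _
  haveI : Finite (Q ⧸ Z) := Quotient.finite _
  obtain ⟨S, hSgen, hScard⟩ := pgroup_exists_gen hp (hQ.to_quotient C)
  set M := (Subgroup.center Q).map (QuotientGroup.mk' Z) with hMdef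
  -- the key consequence of extraspecialness
  have KC : ∀ w : Q, (∀ x : Q, ⁅x, w⁆ ∈ Z) → w ∈ Subgroup.center Q := by
    intro w hw
    have hmem : ((w : Q ⧸ Z)) ∈ Subgroup.center (Q ⧸ Z) := by
      rw [Subgroup.mem_center_iff]
      intro g
      refine QuotientGroup.induction_on g ?_
      intro g
      show (g : Q ⧸ Z) * (w : Q ⧸ Z) = (w : Q ⧸ Z) * (g : Q ⧸ Z)
      rw [← QuotientGroup.mk_mul, ← QuotientGroup.mk_mul, QuotientGroup.eq]
      have h1 : ⁅g⁻¹, w⁻¹⁆ ∈ Z := by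
        rw [comm_inv_right hc2]
        exact Z.inv_mem (hw g⁻¹)
      have heq2 : (g * w)⁻¹ * (w * g) = ⁅g⁻¹, w⁻¹⁆⁻¹ := by
        simp only [commutatorElement_def]; group
      rw [heq2]
      exact Z.inv_mem h1
    rw [← hcentE] at hmem
    obtain ⟨z, hz, hzw⟩ := hmem
    have hzw' : (z : Q ⧸ Z) = (w : Q ⧸ Z) := hzw
    have hZmem : z⁻¹ * w ∈ Z := QuotientGroup.eq.mp hzw'
    have : w = z * (z⁻¹ * w) := by group
    rw [this]
    exact (Subgroup.center Q).mul_mem hz (hZle hZmem)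
  -- homomorphisms attached to elements of A
  have hmul : ∀ (a : ↥A) (x y : Q),
      ((⁅x * y, (a : Q)⁆ : Q) : Q ⧸ Z) = ((⁅x, (a : Q)⁆ : Q) : Q ⧸ Z) * ((⁅y, (a : Q)⁆ : Q) : Q ⧸ Z) := by
    intro a x y
    rw [comm_mul_left hc2, QuotientGroup.mk_mul]
  set ψ : ↥A → Q →* Q ⧸ Z := fun a =>
    MonoidHom.mk' (fun x => ((⁅x, (a : Q)⁆ : Q) : Q ⧸ Z)) (hmul a) with hψdef
  have hψker : ∀ a : ↥A, C ≤ (ψ a).ker := by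
    intro a c hc
    rw [MonoidHom.mem_ker]
    show ((⁅c, (a : Q)⁆ : Q) : Q ⧸ Z) = 1
    rw [QuotientGroup.eq_one_iff]
    exact hc _ a.2
  -- the counting map
  set F : ↥A → ({x : Q ⧸ C // x ∈ S} → ↥M) := fun a s =>
    ⟨((⁅Quotient.out s.1, (a : Q)⁆ : Q) : Q ⧸ Z),
      ⟨⁅Quotient.out s.1, (a : Q)⁆, hc2 _ _, rfl⟩⟩ with hFdef
  have key : ∀ a b : ↥A, F a = F b → ((a : Q)⁻¹ * (b : Q)) ∈ Subgroup.center Q := by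
    intro a b hfe
    have heqS : Set.EqOn (QuotientGroup.lift C (ψ a) (hψker a))
        (QuotientGroup.lift C (ψ b) (hψker b)) (S : Set (Q ⧸ C)) := by
      intro v hv
      have hv' : v ∈ S := hv
      have hval := congrArg Subtype.val (congrFun hfe ⟨v, hv'⟩)
      have h1 : QuotientGroup.lift C (ψ a) (hψker a) v = ψ a (Quotient.out v) := by
        conv_lhs => rw [← QuotientGroup.out_eq' v]
        rfl
      have h2 : QuotientGroup.lift C (ψ b) (hψker b) v = ψ b (Quotient.out v) := by
        conv_lhs => rw [← QuotientGroup.out_eq' v]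
        rfl
      rw [h1, h2]
      exact hval
    have hliftEq : QuotientGroup.lift C (ψ a) (hψker a) = QuotientGroup.lift C (ψ b) (hψker b) :=
      MonoidHom.eq_of_eqOn_dense hSgen heqS
    have hall : ∀ x : Q, ((⁅x, (a : Q)⁆ : Q) : Q ⧸ Z) = ((⁅x, (b : Q)⁆ : Q) : Q ⧸ Z) := by
      intro x
      have := DFunLike.congr_fun hliftEq ((x : Q ⧸ C))
      exact (by simpa [QuotientGroup.lift_mk'] using this : ψ a x = ψ b x)
    apply KC
    intro x
    have h2 := comm_mul_right hc2 x (a : Q) ((a : Q)⁻¹ * (b : Q))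
    rw [mul_inv_cancel_left] at h2
    have h1 : ⁅x, (a : Q)⁻¹ * (b : Q)⁆ = ⁅x, (a : Q)⁆⁻¹ * ⁅x, (b : Q)⁆ := by
      rw [h2, inv_mul_cancel_left]
    have h3 : ((⁅x, (a : Q)⁆⁻¹ * ⁅x, (b : Q)⁆ : Q) : Q ⧸ Z) = 1 := by
      rw [QuotientGroup.mk_mul, QuotientGroup.mk_inv, hall x, inv_mul_cancel]
    have h4 : ⁅x, (a : Q)⁆⁻¹ * ⁅x, (b : Q)⁆ ∈ Z := (QuotientGroup.eq_one_iff _).mp h3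
    rw [h1]
    exact h4
  set K := (Subgroup.center Q).subgroupOf A with hKdef
  have hGinj : Function.Injective (fun q : (↥A ⧸ K) => F (Quotient.out q)) := by
    intro q1 q2 h
    have hab := key _ _ h
    rw [← QuotientGroup.out_eq' q1, ← QuotientGroup.out_eq' q2, QuotientGroup.eq]
    exact Subgroup.mem_subgroupOf.mpr (by simpa using hab)
  haveI : Finite ({x : Q ⧸ C // x ∈ S} → ↥M) := by
    infer_instance
  have hcount1 : Nat.card (↥A ⧸ K) ≤ Nat.card ({x : Q ⧸ C // x ∈ S} → ↥M) :=
    Nat.card_le_card_of_injective _ hGinj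
  have hcard2 : Nat.card ({x : Q ⧸ C // x ∈ S} → ↥M) = p ^ S.card := by
    rw [Nat.card_fun, hMp, Nat.card_eq_fintype_card, Fintype.card_coe]
  have hrelA : (Subgroup.center Q).relIndex A = Nat.card (↥A ⧸ K) := rfl
  have hCQ : Nat.card (Q ⧸ C) = C.index := rfl
  have hCA : C.index ≤ A.index :=
    Nat.le_of_dvd (Nat.pos_of_ne_zero Subgroup.index_ne_zero_of_finite)
      (Subgroup.index_dvd_of_le hAC)
  calc (Subgroup.center Q).relIndex A = Nat.card (↥A ⧸ K) := hrelA
    _ ≤ p ^ S.card := hcount1.trans (le_of_eq hcard2)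
    _ ≤ Nat.card (Q ⧸ C) := hScard
    _ = C.index := hCQ
    _ ≤ A.index := hCA

/-- Let `Q` be a semi-extraspecial finite `p`-group with `|Q : Z(Q)| = p ^ (2n)`. Then for
every maximal subgroup `Z` of `Z(Q)` and every subgroup `A` with `Z ≤ A ≤ Q` such that
`A/Z` is abelian, one has `|A/Z| ≤ p ^ (1 + n)`; consequently, every abelian subgroup `A`
of `Q` satisfies `|A| ≤ |Z(Q)| * p ^ n`. -/

theorem semiExtraspecial_abelian_bound (p : ℕ) (hp : p.Prime) (Q : Type*) [Group Q] [Finite Q]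
    (hQ : IsPGroup p Q) (hsemi : IsSemiExtraspecial p Q) (n : ℕ)
    (hindex : (Subgroup.center Q).index = p ^ (2 * n)) :
    (∀ Z : Subgroup Q, Z < Subgroup.center Q →
      (∀ Z' : Subgroup Q, Z < Z' → Z' ≤ Subgroup.center Q → Z' = Subgroup.center Q) →
      ∀ A : Subgroup Q, Z ≤ A → (∀ a ∈ A, ∀ b ∈ A, ⁅a, b⁆ ∈ Z) →
        Z.relIndex A ≤ p ^ (1 + n)) ∧
    (∀ A : Subgroup Q, (∀ a ∈ A, ∀ b ∈ A, a * b = b * a) →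
      Nat.card A ≤ Nat.card (Subgroup.center Q) * p ^ n) := by
  obtain ⟨hfr, hcomm_center, hext⟩ := hsemi
  have hc2 : ∀ x y : Q, ⁅x, y⁆ ∈ Subgroup.center Q := by
    intro x y
    rw [← hcomm_center, commutator_def]
    exact Subgroup.commutator_mem_commutator (Subgroup.mem_top x) (Subgroup.mem_top y)
  have part1 : ∀ Z : Subgroup Q, Z < Subgroup.center Q →
      (∀ Z' : Subgroup Q, Z < Z' → Z' ≤ Subgroup.center Q → Z' = Subgroup.center Q) →
      ∀ A : Subgroup Q, Z ≤ A → (∀ a ∈ A, ∀ b ∈ A, ⁅a, b⁆ ∈ Z) →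
        Z.relIndex A ≤ p ^ (1 + n) := by
    intro Z hZlt hZmax A hZA hA
    haveI hZn : Z.Normal := my_normal_of_le_center hZlt.le
    have hE := hext Z hZlt hZmax
    obtain ⟨hmapC, hMp, hrelp, hzp⟩ := center_map_eq p hp Q Z hZlt hE.2.2
    set A₁ := A ⊔ Subgroup.center Q with hA₁def
    have hA₁ : ∀ a ∈ A₁, ∀ b ∈ A₁, ⁅a, b⁆ ∈ Z := sup_center_comm A Z hA
    have hcA₁ : Subgroup.center Q ≤ A₁ := le_sup_right
    have hcore := part1_core p hp Q hQ hc2 Z hZlt.le hmapC hMp A₁ hcA₁ hA₁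
    set r := (Subgroup.center Q).relIndex A₁ with hrdef
    have hsq : r * A₁.index = p ^ (2 * n) := by
      rw [hrdef, Subgroup.relIndex_mul_index hcA₁, hindex]
    have hr_le : r ≤ p ^ n := by
      by_contra hcon
      push_neg at hcon
      have hp0 : 0 < p ^ n := pow_pos hp.pos n
      have h4 : p ^ n * p ^ n < r * r :=
        lt_of_lt_of_le (mul_lt_mul_of_pos_right hcon hp0) (mul_le_mul_right hcon.le r)
      have h2 : r * r ≤ r * A₁.index := Nat.mul_le_mul_left r hcore
      have h3 : p ^ n * p ^ n = p ^ (2 * n) := by rw [two_mul, pow_add]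
      omega
    have hZA₁ : Z.relIndex A₁ = p * r := by
      rw [hrdef, ← Subgroup.relIndex_mul_relIndex Z (Subgroup.center Q) A₁ hZlt.le hcA₁, hrelp]
    have hne : A.relIndex A₁ ≠ 0 := Subgroup.index_ne_zero_of_finite
    have hle1 : Z.relIndex A ≤ Z.relIndex A₁ := by
      rw [← Subgroup.relIndex_mul_relIndex Z A A₁ hZA le_sup_left]
      exact Nat.le_mul_of_pos_right _ (Nat.pos_of_ne_zero hne)
    calc Z.relIndex A ≤ Z.relIndex A₁ := hle1
      _ = p * r := hZA₁
      _ ≤ p * p ^ n := Nat.mul_le_mul_left p hr_le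
      _ = p ^ (1 + n) := by rw [pow_add, pow_one]
  refine ⟨part1, ?_⟩
  intro A hA
  by_cases hbot : Subgroup.center Q = ⊥
  · have htriv : ∀ x y : Q, ⁅x, y⁆ = 1 := by
      intro x y
      have := hc2 x y
      rw [hbot, Subgroup.mem_bot] at this
      exact this
    have hcen_top : Subgroup.center Q = ⊤ := by
      rw [Subgroup.eq_top_iff']
      intro x
      rw [Subgroup.mem_center_iff]
      intro g
      exact commutatorElement_eq_one_iff_commute.mp (htriv g x)
    have hQ1 : Nat.card Q = 1 := by
      have h1 : Nat.card (⊤ : Subgroup Q) = Nat.card Q := Subgroup.card_top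
      rw [← hcen_top, hbot, Subgroup.card_bot] at h1
      exact h1.symm
    have hA1 : Nat.card A ≤ 1 := hQ1 ▸ A.card_le_card_group
    have hpos : 1 ≤ Nat.card (Subgroup.center Q) * p ^ n :=
      Nat.one_le_iff_ne_zero.mpr (Nat.mul_ne_zero (Nat.card_pos).ne' (pow_pos hp.pos n).ne')
    exact hA1.trans hpos
  · -- find a maximal subgroup Z of the center
    haveI : Finite (Subgroup Q) := Finite.of_injective _ SetLike.coe_injective
    have hne : {W : Subgroup Q | W < Subgroup.center Q}.Nonempty :=
      ⟨⊥, Set.mem_setOf.mpr (bot_lt_iff_ne_bot.mpr (fun h => hbot h))⟩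
    obtain ⟨Z, hZmem, hZmax'⟩ :=
      Set.Finite.exists_maximalFor id {W : Subgroup Q | W < Subgroup.center Q}
        (Set.toFinite _) hne
    have hZlt : Z < Subgroup.center Q := hZmem
    have hZmax : ∀ Z' : Subgroup Q, Z < Z' → Z' ≤ Subgroup.center Q →
        Z' = Subgroup.center Q := by
      intro Z' h1 h2
      rcases h2.lt_or_eq with h | h
      · exact absurd (le_antisymm h1.le (hZmax' h h1.le)) (ne_of_lt h1)
      · exact h
    haveI hZn : Z.Normal := my_normal_of_le_center hZlt.le
    have hE := hext Z hZlt hZmax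
    obtain ⟨hmapC, hMp, hrelp, hzp⟩ := center_map_eq p hp Q Z hZlt hE.2.2
    set A₂ := A ⊔ Subgroup.center Q with hA₂def
    have hA₂comm : ∀ a ∈ A₂, ∀ b ∈ A₂, ⁅a, b⁆ ∈ Z := by
      apply sup_center_comm
      intro a ha b hb
      have h1 : ⁅a, b⁆ = 1 := commutatorElement_eq_one_iff_commute.mpr (hA a ha b hb)
      rw [h1]
      exact Z.one_mem
    have hZA₂ : Z ≤ A₂ := hZlt.le.trans le_sup_right
    have h1 := part1 Z hZlt hZmax A₂ hZA₂ hA₂comm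
    have hcardZ : Nat.card Z * p = Nat.card (Subgroup.center Q) := by
      have hc := Subgroup.card_mul_index (Z.subgroupOf (Subgroup.center Q))
      rw [(Nat.card_congr (Subgroup.subgroupOfEquivOfLe hZlt.le).toEquiv :
        Nat.card (Z.subgroupOf (Subgroup.center Q)) = Nat.card Z)] at hc
      have hrelp' : (Z.subgroupOf (Subgroup.center Q)).index = p := hrelp
      rw [hrelp'] at hc
      exact hc
    have hcardA₂ : Nat.card A₂ = Nat.card Z * Z.relIndex A₂ := by
      have hc := Subgroup.card_mul_index (Z.subgroupOf A₂)
      rw [(Nat.card_congr (Subgroup.subgroupOfEquivOfLe hZA₂).toEquiv :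
        Nat.card (Z.subgroupOf A₂) = Nat.card Z)] at hc
      exact hc.symm
    calc Nat.card A ≤ Nat.card A₂ := Subgroup.card_le_of_le le_sup_left
      _ = Nat.card Z * Z.relIndex A₂ := hcardA₂
      _ ≤ Nat.card Z * p ^ (1 + n) := Nat.mul_le_mul_left _ h1
      _ = (Nat.card Z * p) * p ^ n := by rw [pow_add, pow_one]; ring
      _ = Nat.card (Subgroup.center Q) * p ^ n := by rw [hcardZ]
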